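/- For every n ≥ 1, the tuple M_{3n} = (m_1,...,m_{3n}) with m_j = 2^{j+1} − 1 (i.e. (3, 7, 15, 31, ..., 2^{3n+1} − 1)) consists of odd positive integers, has length divisible by 3, and is super-increasing; consequently any two distinct allowable sub-tuples I = (i_1,...,i_r) and J = (j_1,...,j_s) for M_{3n} satisfy Σ_{ℓ=1}^{r} (−1)^{i_ℓ} m_{i_ℓ} ≠ Σ_{ℓ=1}^{s} (−1)^{j_ℓ} m_{j_ℓ}. -/

import Mathlib

/-- Continued fraction value of a list of rationals:
`cf [n₁,...,n_k] = 1/(n₁ + 1/(n₂ + ... + 1/n_k))`. -/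
def cf : List ℚ → ℚ
  | [] => 0
  | n :: L => 1 / (n + cf L)

/-- The alternating sequence `-2, 2, -2, 2, ..., ±2` of length `n`. -/
def altSeq (n : ℕ) : List ℤ :=
  (List.range n).map (fun j => (-1 : ℤ) ^ (j + 1) * 2)

/-- The `i`-th entry (1-based) of the tuple `M`. -/
def ent (M : List ℕ) (i : ℕ) : ℕ := M.getD (i - 1) 0

/-- `I` is an allowable sub-tuple for the tuple `M` of positive integers:
a strictly increasing tuple of indices in `{1,...,k}` with consecutive
gaps at least 2, such that for every index `i` with `m_i = 1` at least
one of `i-1, i, i+1` belongs to `I`. -/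
def IsAllowable (M : List ℕ) (I : List ℕ) : Prop :=
  I.Chain' (fun a b => a + 2 ≤ b) ∧
  (∀ i ∈ I, 1 ≤ i ∧ i ≤ M.length) ∧
  (∀ i, 1 ≤ i → i ≤ M.length → ent M i = 1 → (i - 1 ∈ I ∨ i ∈ I ∨ i + 1 ∈ I))

/-- The sign `∏_{i' ∈ I, i' < i} (-1)^(m_{i'})` adjusting the entries coming
from position `i` of `M`. -/
def subSign (M : List ℕ) (I : List ℕ) (i : ℕ) : ℤ :=
  ((I.filter (fun i' => decide (i' < i))).map (fun i' => (-1 : ℤ) ^ ent M i')).prod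

/-- Before sign adjustment, the block of entries of `M_I` coming from position `i`
of `M`: either the alternating sequence `-2,2,...,±2` of length `m_i - 1`
(if `i ∈ I`), or the single entry `m_i` increased by 1 for each neighbor of `i`
lying in `I`. -/
def block (M : List ℕ) (I : List ℕ) (i : ℕ) : List ℤ :=
  if i ∈ I then altSeq (ent M i - 1)
  else [(ent M i : ℤ) + (if i - 1 ∈ I then 1 else 0) + (if i + 1 ∈ I then 1 else 0)]

/-- The continued fraction expansion `M_I` associated to an allowable sub-tuple `I`
of `M`. -/
def MI (M : List ℕ) (I : List ℕ) : List ℤ :=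
  ((List.range M.length).map (fun idx =>
    (block M I (idx + 1)).map (fun q => subSign M I (idx + 1) * q))).flatten

/-- `n⁺(N) = #{i : (-1)^(i+1) n_i > 0}` (1-based `i`). -/
def nplus (N : List ℤ) : ℕ :=
  ((List.range N.length).filter
    (fun idx => decide (0 < (-1 : ℤ) ^ idx * N.getD idx 0))).length

/-- `n⁻(N) = #{i : (-1)^(i+1) n_i < 0}` (1-based `i`). -/
def nminus (N : List ℤ) : ℕ :=
  ((List.range N.length).filter
    (fun idx => decide ((-1 : ℤ) ^ idx * N.getD idx 0 < 0))).length

/-- `Σ_{i ∈ I} (-1)^i m_i`. -/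
def sgnSum (M : List ℕ) (I : List ℕ) : ℤ :=
  (I.map (fun i => (-1 : ℤ) ^ i * (ent M i : ℤ))).sum

/-- The dual sub-tuple `(k+1-i_j, ..., k+1-i_1)` of `I = (i_1,...,i_j)`. -/
def dualSub (k : ℕ) (I : List ℕ) : List ℕ :=
  (I.map (fun i => k + 1 - i)).reverse

/-- `(m_1,...,m_k)` is super-increasing if `m_i > Σ_{j<i} m_j` for all `i`. -/
def SuperInc (M : List ℕ) : Prop :=
  ∀ i, 1 ≤ i → i ≤ M.length → (M.take (i - 1)).sum < ent M i



lemma entSum (M : List ℕ) : ∀ k, k ≤ M.length →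
    ∑ i ∈ Finset.Icc 1 k, (ent M i : ℤ) = ((M.take k).sum : ℤ) := by
  intro k
  induction k with
  | zero => simp
  | succ k ih =>
    intro hk
    rw [Finset.sum_Icc_succ_top (by omega), ih (by omega),
      List.sum_take_succ M k (by omega)]
    have : ent M (k + 1) = M[k] := by
      show M.getD (k + 1 - 1) 0 = M[k]
      simp only [Nat.add_sub_cancel]
      exact List.getD_eq_getElem M 0 (by omega)
    rw [this]
    push_cast
    ring

lemma absBound (M : List ℕ) (S : Finset ℕ) :
    |∑ i ∈ S, (-1 : ℤ) ^ i * (ent M i : ℤ)| ≤ ∑ i ∈ S, (ent M i : ℤ) := by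
  calc |∑ i ∈ S, (-1 : ℤ) ^ i * (ent M i : ℤ)|
      ≤ ∑ i ∈ S, |(-1 : ℤ) ^ i * (ent M i : ℤ)| := Finset.abs_sum_le_sum_abs _ _
    _ = ∑ i ∈ S, (ent M i : ℤ) := by
        apply Finset.sum_congr rfl
        intro i _
        rw [abs_mul, abs_pow, abs_neg, abs_one, one_pow, one_mul,
          abs_of_nonneg (by positivity)]

lemma subBound (M : List ℕ) (k : ℕ) (hk : k ≤ M.length) (S : Finset ℕ)
    (hS : S ⊆ Finset.Icc 1 k) :
    ∑ i ∈ S, (ent M i : ℤ) ≤ ((M.take k).sum : ℤ) := by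
  calc ∑ i ∈ S, (ent M i : ℤ)
      ≤ ∑ i ∈ Finset.Icc 1 k, (ent M i : ℤ) := by
        apply Finset.sum_le_sum_of_subset_of_nonneg hS
        intro i _ _; positivity
    _ = ((M.take k).sum : ℤ) := entSum M k hk

lemma noMix (M : List ℕ) (hM : SuperInc M) (k : ℕ) (hk : k + 1 ≤ M.length)
    (S T : Finset ℕ) (hS : S ⊆ Finset.Icc 1 (k + 1)) (hT : T ⊆ Finset.Icc 1 k)
    (hmem : k + 1 ∈ S) :
    (∑ i ∈ S, (-1 : ℤ) ^ i * (ent M i : ℤ)) ≠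
      (∑ i ∈ T, (-1 : ℤ) ^ i * (ent M i : ℤ)) := by
  intro heq
  set f : ℕ → ℤ := fun i => (-1 : ℤ) ^ i * (ent M i : ℤ) with hf
  set S' := S.erase (k + 1) with hS'def
  have hS' : S' ⊆ Finset.Icc 1 k := by
    intro x hx
    have h1 := Finset.ne_of_mem_erase hx
    have h2 := hS (Finset.mem_of_mem_erase hx)
    simp only [Finset.mem_Icc] at h2 ⊢
    omega
  have hsplit : ∑ i ∈ S', f i + f (k + 1) = ∑ i ∈ S, f i :=
    Finset.sum_erase_add S f hmem
  -- symmetric difference bound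
  have hA : T \ S' ⊆ Finset.Icc 1 k := fun x hx => hT (Finset.mem_sdiff.mp hx).1
  have hB : S' \ T ⊆ Finset.Icc 1 k := fun x hx => hS' (Finset.mem_sdiff.mp hx).1
  have hdisj : Disjoint (T \ S') (S' \ T) := disjoint_sdiff_sdiff
  have hunion : (T \ S') ∪ (S' \ T) ⊆ Finset.Icc 1 k := Finset.union_subset hA hB
  have hdiff : ∑ i ∈ T \ S', f i - ∑ i ∈ S' \ T, f i = ∑ i ∈ T, f i - ∑ i ∈ S', f i :=
    Finset.sum_sdiff_sub_sum_sdiff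
  have hkey : ∑ i ∈ T, f i - ∑ i ∈ S', f i = f (k + 1) := by
    rw [← heq, ← hsplit]; ring
  have habsf : |f (k + 1)| = (ent M (k + 1) : ℤ) := by
    rw [hf]
    simp only
    rw [abs_mul, abs_pow, abs_neg, abs_one, one_pow, one_mul,
      abs_of_nonneg (by positivity)]
  have hb1 := absBound M (T \ S')
  have hb2 := absBound M (S' \ T)
  have hsum_union : ∑ i ∈ T \ S', (ent M i : ℤ) + ∑ i ∈ S' \ T, (ent M i : ℤ)
      = ∑ i ∈ (T \ S') ∪ (S' \ T), (ent M i : ℤ) := (Finset.sum_union hdisj).symm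
  have hbu := subBound M k (by omega) _ hunion
  have hsup : (M.take k).sum < ent M (k + 1) := by
    have := hM (k + 1) (by omega) hk
    simpa using this
  have hsup' : ((M.take k).sum : ℤ) < (ent M (k + 1) : ℤ) := by exact_mod_cast hsup
  have : (ent M (k + 1) : ℤ) ≤ ((M.take k).sum : ℤ) := by
    calc (ent M (k + 1) : ℤ) = |f (k + 1)| := habsf.symm
      _ = |∑ i ∈ T \ S', f i - ∑ i ∈ S' \ T, f i| := by rw [hdiff, hkey]
      _ ≤ |∑ i ∈ T \ S', f i| + |∑ i ∈ S' \ T, f i| := abs_sub _ _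
      _ ≤ ∑ i ∈ T \ S', (ent M i : ℤ) + ∑ i ∈ S' \ T, (ent M i : ℤ) := by linarith
      _ = ∑ i ∈ (T \ S') ∪ (S' \ T), (ent M i : ℤ) := hsum_union
      _ ≤ ((M.take k).sum : ℤ) := hbu
  linarith

lemma keyInj (M : List ℕ) (hM : SuperInc M) :
    ∀ k, k ≤ M.length → ∀ S T : Finset ℕ, S ⊆ Finset.Icc 1 k → T ⊆ Finset.Icc 1 k →
    (∑ i ∈ S, (-1 : ℤ) ^ i * (ent M i : ℤ)) =
      (∑ i ∈ T, (-1 : ℤ) ^ i * (ent M i : ℤ)) → S = T := by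
  intro k
  induction k with
  | zero =>
    intro _ S T hS hT _
    simp only [show Finset.Icc 1 0 = ∅ from rfl, Finset.subset_empty] at hS hT
    rw [hS, hT]
  | succ k ih =>
    intro hk S T hS hT heq
    have sub_of_not : ∀ U : Finset ℕ, U ⊆ Finset.Icc 1 (k + 1) → k + 1 ∉ U →
        U ⊆ Finset.Icc 1 k := by
      intro U hU hnm x hx
      have h1 := hU hx
      simp only [Finset.mem_Icc] at h1 ⊢
      have : x ≠ k + 1 := fun h => hnm (h ▸ hx)
      omega
    by_cases hSk : k + 1 ∈ S
    · by_cases hTk : k + 1 ∈ T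
      · have hS' : S.erase (k + 1) ⊆ Finset.Icc 1 k := by
          intro x hx
          have h1 := Finset.ne_of_mem_erase hx
          have h2 := hS (Finset.mem_of_mem_erase hx)
          simp only [Finset.mem_Icc] at h2 ⊢; omega
        have hT' : T.erase (k + 1) ⊆ Finset.Icc 1 k := by
          intro x hx
          have h1 := Finset.ne_of_mem_erase hx
          have h2 := hT (Finset.mem_of_mem_erase hx)
          simp only [Finset.mem_Icc] at h2 ⊢; omega
        have e1 := Finset.sum_erase_add S (fun i => (-1 : ℤ) ^ i * (ent M i : ℤ)) hSk
        have e2 := Finset.sum_erase_add T (fun i => (-1 : ℤ) ^ i * (ent M i : ℤ)) hTk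
        have hsums : (∑ i ∈ S.erase (k+1), (-1 : ℤ) ^ i * (ent M i : ℤ)) =
            (∑ i ∈ T.erase (k+1), (-1 : ℤ) ^ i * (ent M i : ℤ)) := by
          linarith [heq]
        have herase := ih (by omega) _ _ hS' hT' hsums
        rw [← Finset.insert_erase hSk, ← Finset.insert_erase hTk, herase]
      · exact absurd heq (noMix M hM k hk S T hS (sub_of_not T hT hTk) hSk)
    · by_cases hTk : k + 1 ∈ T
      · exact absurd heq.symm (noMix M hM k hk T S hT (sub_of_not S hS hSk) hTk)
      · exact ih (by omega) S T (sub_of_not S hS hSk) (sub_of_not T hT hTk) heq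

lemma sgnSum_inj (M : List ℕ) (hM : SuperInc M) (I J : List ℕ)
    (hI : IsAllowable M I) (hJ : IsAllowable M J) (hne : I ≠ J) :
    sgnSum M I ≠ sgnSum M J := by
  intro heq
  apply hne
  have pI : I.Pairwise (· < ·) :=
    List.isChain_iff_pairwise.mp (hI.1.imp (fun {a b} h => by omega))
  have pJ : J.Pairwise (· < ·) :=
    List.isChain_iff_pairwise.mp (hJ.1.imp (fun {a b} h => by omega))
  have nI : I.Nodup := pI.imp ne_of_lt
  have nJ : J.Nodup := pJ.imp ne_of_lt
  have hIs : I.toFinset ⊆ Finset.Icc 1 M.length := by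
    intro x hx
    have := hI.2.1 x (List.mem_toFinset.mp hx)
    simp only [Finset.mem_Icc]; omega
  have hJs : J.toFinset ⊆ Finset.Icc 1 M.length := by
    intro x hx
    have := hJ.2.1 x (List.mem_toFinset.mp hx)
    simp only [Finset.mem_Icc]; omega
  have e1 : sgnSum M I = ∑ i ∈ I.toFinset, (-1 : ℤ) ^ i * (ent M i : ℤ) :=
    (List.sum_toFinset _ nI).symm
  have e2 : sgnSum M J = ∑ i ∈ J.toFinset, (-1 : ℤ) ^ i * (ent M i : ℤ) :=
    (List.sum_toFinset _ nJ).symm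
  have hfin : I.toFinset = J.toFinset :=
    keyInj M hM M.length le_rfl _ _ hIs hJs (by rw [← e1, ← e2, heq])
  exact List.Perm.eq_of_pairwise'
    (pI.imp le_of_lt) (pJ.imp le_of_lt)
    (List.perm_of_nodup_nodup_toFinset_eq nI nJ hfin)

-- family facts
section family
variable (n : ℕ)

lemma fam_len : ((List.range (3 * n)).map (fun j => 2 ^ (j + 2) - 1)).length = 3 * n := by
  simp

lemma fam_ent (i : ℕ) (h1 : 1 ≤ i) (h2 : i ≤ 3 * n) :
    ent ((List.range (3 * n)).map (fun j => 2 ^ (j + 2) - 1)) i = 2 ^ (i + 1) - 1 := by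
  have hlt : i - 1 < ((List.range (3 * n)).map (fun j => 2 ^ (j + 2) - 1)).length := by
    simp; omega
  rw [ent, List.getD_eq_getElem _ 0 hlt]
  simp only [List.getElem_map, List.getElem_range]
  have : i - 1 + 2 = i + 1 := by omega
  rw [this]

lemma fam_take : ∀ i, i ≤ 3 * n →
    (((List.range (3 * n)).map (fun j => 2 ^ (j + 2) - 1)).take i).sum + i + 4
      = 2 ^ (i + 2) := by
  intro i
  induction i with
  | zero => simp
  | succ i ih =>
    intro h
    have hlt : i < ((List.range (3 * n)).map (fun j => 2 ^ (j + 2) - 1)).length := by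
      simp; omega
    rw [List.sum_take_succ _ i hlt]
    have hel : ((List.range (3 * n)).map (fun j => 2 ^ (j + 2) - 1))[i] = 2 ^ (i + 2) - 1 := by
      simp
    rw [hel]
    have := ih (by omega)
    have h4 : 4 ≤ 2 ^ (i + 2) := by
      calc (4:ℕ) = 2 ^ 2 := rfl
        _ ≤ 2 ^ (i + 2) := Nat.pow_le_pow_right (by norm_num) (by omega)
    have : 2 ^ (i + 1 + 2) = 2 * 2 ^ (i + 2) := by ring
    omega

lemma fam_superInc : SuperInc ((List.range (3 * n)).map (fun j => 2 ^ (j + 2) - 1)) := by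
  intro i h1 h2
  rw [fam_len] at h2
  rw [fam_ent n i h1 h2]
  have ht := fam_take n (i - 1) (by omega)
  have he : i - 1 + 2 = i + 1 := by omega
  rw [he] at ht
  have h4 : 4 ≤ 2 ^ (i + 1) := by
    calc (4:ℕ) = 2 ^ 2 := rfl
      _ ≤ 2 ^ (i + 1) := Nat.pow_le_pow_right (by norm_num) (by omega)
  omega

end family

/-- The family `M_(3n) = (3, 7, 15, ..., 2^(3n+1) - 1)`: it consists of odd
positive integers, has length divisible by 3, and is super-increasing; hence
distinct allowable sub-tuples have distinct signed sums (no repeated boundary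
slopes). -/
theorem family_M3n_superInc_no_repeats (n : ℕ) (hn : 1 ≤ n) :
    (∀ m ∈ (List.range (3 * n)).map (fun j => 2 ^ (j + 2) - 1), 0 < m ∧ Odd m) ∧
    3 ∣ ((List.range (3 * n)).map (fun j => 2 ^ (j + 2) - 1)).length ∧
    SuperInc ((List.range (3 * n)).map (fun j => 2 ^ (j + 2) - 1)) ∧
    (∀ I J : List ℕ,
      IsAllowable ((List.range (3 * n)).map (fun j => 2 ^ (j + 2) - 1)) I →
      IsAllowable ((List.range (3 * n)).map (fun j => 2 ^ (j + 2) - 1)) J →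
      I ≠ J →
      sgnSum ((List.range (3 * n)).map (fun j => 2 ^ (j + 2) - 1)) I ≠
        sgnSum ((List.range (3 * n)).map (fun j => 2 ^ (j + 2) - 1)) J) := by
  refine ⟨?_, ?_, fam_superInc n, ?_⟩
  · intro m hm
    simp only [List.mem_map, List.mem_range] at hm
    obtain ⟨j, hj, rfl⟩ := hm
    have h4 : 4 ≤ 2 ^ (j + 2) := by
      calc (4:ℕ) = 2 ^ 2 := rfl
        _ ≤ 2 ^ (j + 2) := Nat.pow_le_pow_right (by norm_num) (by omega)
    constructor
    · omega
    · have heven : Even (2 ^ (j + 2)) := by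
        have : 2 ^ (j + 2) = 2 * 2 ^ (j + 1) := by ring
        exact ⟨2 ^ (j + 1), by omega⟩
      exact Nat.Even.sub_odd (by omega) heven odd_one
  · rw [fam_len]
    exact ⟨n, rfl⟩
  · exact fun I J hI hJ hne => sgnSum_inj _ (fam_superInc n) I J hI hJ hne
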